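/- Let d ≥ 2, let A be the standard basis of C^d and B the Fourier basis. A nonzero vector ψ ∈ C^d is KD nonclassical (i.e., some entry of its Kirkwood-Dirac distribution is negative or nonreal) if and only if n_A(ψ)·n_B(ψ) > d. -/

import Mathlib

open Complex Finset
open scoped Classical

noncomputable def dftOmega (d : ℕ) : ℂ := Complex.exp (2 * Real.pi * Complex.I / d)

/-- The j-th Fourier basis vector of `ℂ^d`, with i-th entry `ω^{ij}/√d`. -/
noncomputable def fourierVec (d : ℕ) (j : Fin d) : Fin d → ℂ :=
  fun i => dftOmega d ^ ((i : ℕ) * (j : ℕ)) / Real.sqrt d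

/-- The j-th Fourier coefficient `⟨f_j, ψ⟩ = (1/√d)∑_i ω^{−ij} ψ(i)`. -/
noncomputable def dftCoeff (d : ℕ) (ψ : Fin d → ℂ) (j : Fin d) : ℂ :=
  ∑ i, (starRingEnd ℂ) (fourierVec d j i) * ψ i

/-- Number of nonzero standard-basis coordinates of ψ. -/
noncomputable def nA (d : ℕ) (ψ : Fin d → ℂ) : ℕ :=
  (Finset.univ.filter fun i => ψ i ≠ 0).card

/-- Number of nonzero Fourier coefficients of ψ. -/
noncomputable def nB (d : ℕ) (ψ : Fin d → ℂ) : ℕ :=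
  (Finset.univ.filter fun j => dftCoeff d ψ j ≠ 0).card

/-- Kirkwood-Dirac distribution `Q_{ij} = ⟨e_i,ψ⟩⟨ψ,f_j⟩⟨f_j,e_i⟩` of ψ with
respect to the standard basis and the Fourier basis. -/
noncomputable def KD (d : ℕ) (ψ : Fin d → ℂ) (i j : Fin d) : ℂ :=
  ψ i * (∑ k, (starRingEnd ℂ) (ψ k) * fourierVec d j k) * (starRingEnd ℂ) (fourierVec d j i)

noncomputable def Complex.abs : AbsoluteValue ℂ ℝ where
  toFun z := ‖z‖
  map_mul' := norm_mul
  nonneg' := norm_nonneg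
  eq_zero' _ := norm_eq_zero
  add_le' := norm_add_le

lemma Complex.norm_eq_abs (z : ℂ) : ‖z‖ = Complex.abs z := rfl

lemma Complex.abs_exp (z : ℂ) : Complex.abs (Complex.exp z) = Real.exp z.re := Complex.norm_exp z

lemma Complex.abs_conj (z : ℂ) : Complex.abs ((starRingEnd ℂ) z) = Complex.abs z := Complex.norm_conj z

lemma Complex.abs_ofReal (r : ℝ) : Complex.abs (r : ℂ) = |r| := Complex.norm_real r

lemma Complex.sq_abs (z : ℂ) : Complex.abs z ^ 2 = Complex.normSq z := Complex.sq_norm z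

lemma Complex.re_le_abs (z : ℂ) : z.re ≤ Complex.abs z := Complex.re_le_norm z

lemma Complex.normSq_eq_abs (z : ℂ) : Complex.normSq z = Complex.abs z ^ 2 := Complex.normSq_eq_norm_sq z

lemma omega_prim (d : ℕ) (hd : d ≠ 0) : IsPrimitiveRoot (dftOmega d) d :=
  Complex.isPrimitiveRoot_exp d hd

lemma omega_abs (d : ℕ) : Complex.abs (dftOmega d) = 1 := by
  rw [dftOmega, Complex.abs_exp]
  norm_num [Complex.div_re]

lemma omega_ne (d : ℕ) : dftOmega d ≠ 0 := by
  intro h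
  have := omega_abs d
  rw [h] at this
  simp at this

lemma omega_conj (d : ℕ) : (starRingEnd ℂ) (dftOmega d) = (dftOmega d)⁻¹ :=
  (Complex.inv_eq_conj (by rw [Complex.norm_eq_abs, omega_abs])).symm

lemma geom_sum_omega (d : ℕ) (hd : d ≠ 0) (m : ℤ) (hm : ¬ (d : ℤ) ∣ m) :
    ∑ j ∈ Finset.range d, (dftOmega d ^ m) ^ j = 0 := by
  have hζd : (dftOmega d ^ m) ^ (d : ℕ) = 1 := by
    rw [← zpow_natCast, ← zpow_mul, mul_comm, zpow_mul, zpow_natCast,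
      (omega_prim d hd).pow_eq_one, one_zpow]
  have hζ1 : dftOmega d ^ m ≠ 1 := by
    intro h
    exact hm (((omega_prim d hd).zpow_eq_one_iff_dvd m).mp h)
  have := geom_sum_eq hζ1 d
  rw [this, hζd]
  simp

lemma sqrt_d_sq (d : ℕ) : ((Real.sqrt d : ℝ) : ℂ) * ((Real.sqrt d : ℝ) : ℂ) = (d : ℂ) := by
  rw [← Complex.ofReal_mul, Real.mul_self_sqrt (Nat.cast_nonneg d)]
  norm_cast

lemma fourier_orthog (d : ℕ) (hd : d ≠ 0) (i k : Fin d) :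
    ∑ j : Fin d, (starRingEnd ℂ) (fourierVec d j k) * fourierVec d j i =
      if i = k then 1 else 0 := by
  have hdC : (d : ℂ) ≠ 0 := Nat.cast_ne_zero.mpr hd
  have key : ∀ j : Fin d, (starRingEnd ℂ) (fourierVec d j k) * fourierVec d j i =
      (dftOmega d ^ ((i : ℤ) - (k : ℤ))) ^ (j : ℕ) / d := by
    intro j
    have hnum : (dftOmega d) ^ ((i : ℕ) * (j : ℕ)) =
        (dftOmega d ^ ((i : ℤ) - (k : ℤ))) ^ (j : ℕ) * dftOmega d ^ ((k : ℕ) * (j : ℕ)) := by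
      rw [← zpow_natCast (dftOmega d) ((i : ℕ) * j), ← zpow_natCast (dftOmega d) ((k : ℕ) * j),
        ← zpow_natCast (dftOmega d ^ ((i : ℤ) - (k : ℤ))) (j : ℕ), ← zpow_mul,
        ← zpow_add₀ (omega_ne d)]
      congr 1
      push_cast
      ring
    simp only [fourierVec, map_div₀, map_pow, omega_conj, Complex.conj_ofReal, inv_pow]
    rw [div_mul_div_comm, sqrt_d_sq, hnum]
    rw [mul_comm ((dftOmega d ^ ((i : ℤ) - (k : ℤ))) ^ (j : ℕ)) _,
      inv_mul_cancel_left₀ (pow_ne_zero _ (omega_ne d))]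
  rw [Finset.sum_congr rfl (fun j _ => key j)]
  rw [← Finset.sum_div]
  by_cases h : i = k
  · subst h
    simp [div_eq_one_iff_eq hdC]
  · have hm : ¬ ((d : ℤ) ∣ ((i : ℤ) - (k : ℤ))) := by
      intro hdvd
      have h1 : ((i : ℤ) - (k : ℤ)) = 0 := by
        refine Int.eq_zero_of_abs_lt_dvd hdvd ?_
        have h2 : (i : ℤ) < d := by exact_mod_cast i.isLt
        have h3 : (k : ℤ) < d := by exact_mod_cast k.isLt
        have h4 : 0 ≤ (i : ℤ) := Int.natCast_nonneg _
        have h5 : 0 ≤ (k : ℤ) := Int.natCast_nonneg _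
        rw [abs_lt]
        omega
      have : (i : ℤ) = (k : ℤ) := by omega
      exact h (Fin.ext (by exact_mod_cast this))
    rw [Fin.sum_univ_eq_sum_range (fun j => (dftOmega d ^ ((i : ℤ) - (k : ℤ))) ^ j) d]
    rw [geom_sum_omega d hd _ hm]
    simp [h]

lemma fourier_inversion (d : ℕ) (hd : d ≠ 0) (ψ : Fin d → ℂ) (i : Fin d) :
    ∑ j, dftCoeff d ψ j * fourierVec d j i = ψ i := by
  simp only [dftCoeff, Finset.sum_mul]
  rw [Finset.sum_comm]
  have : ∀ k : Fin d, ∑ j, (starRingEnd ℂ) (fourierVec d j k) * ψ k * fourierVec d j i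
      = ψ k * (if i = k then 1 else 0) := by
    intro k
    rw [← fourier_orthog d hd i k, Finset.mul_sum]
    exact Finset.sum_congr rfl fun j _ => by ring
  rw [Finset.sum_congr rfl fun k _ => this k]
  simp

lemma KD_eq (d : ℕ) (ψ : Fin d → ℂ) (i j : Fin d) :
    KD d ψ i j = ψ i * (starRingEnd ℂ) (dftCoeff d ψ j) * (starRingEnd ℂ) (fourierVec d j i) := by
  rw [KD, dftCoeff, map_sum]
  congr 2
  exact Finset.sum_congr rfl fun k _ => by rw [map_mul, Complex.conj_conj, mul_comm]

lemma KD_margA (d : ℕ) (ψ : Fin d → ℂ) (j : Fin d) :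
    ∑ i, KD d ψ i j = (Complex.normSq (dftCoeff d ψ j) : ℂ) := by
  simp only [KD_eq]
  have : ∀ i : Fin d, ψ i * (starRingEnd ℂ) (dftCoeff d ψ j) * (starRingEnd ℂ) (fourierVec d j i)
      = (starRingEnd ℂ) (dftCoeff d ψ j) * ((starRingEnd ℂ) (fourierVec d j i) * ψ i) :=
    fun i => by ring
  rw [Finset.sum_congr rfl fun i _ => this i, ← Finset.mul_sum, ← dftCoeff,
    ← Complex.normSq_eq_conj_mul_self]

lemma KD_margB (d : ℕ) (hd : d ≠ 0) (ψ : Fin d → ℂ) (i : Fin d) :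
    ∑ j, KD d ψ i j = (Complex.normSq (ψ i) : ℂ) := by
  simp only [KD_eq]
  have : ∀ j : Fin d, ψ i * (starRingEnd ℂ) (dftCoeff d ψ j) * (starRingEnd ℂ) (fourierVec d j i)
      = ψ i * (starRingEnd ℂ) (dftCoeff d ψ j * fourierVec d j i) :=
    fun j => by rw [map_mul]; ring
  rw [Finset.sum_congr rfl fun j _ => this j, ← Finset.mul_sum, ← map_sum,
    fourier_inversion d hd ψ i, Complex.mul_conj]

lemma parseval (d : ℕ) (hd : d ≠ 0) (ψ : Fin d → ℂ) :
    ∑ i, Complex.normSq (ψ i) = ∑ j, Complex.normSq (dftCoeff d ψ j) := by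
  have h1 : ((∑ i, Complex.normSq (ψ i) : ℝ) : ℂ) = ((∑ j, Complex.normSq (dftCoeff d ψ j) : ℝ) : ℂ) := by
    push_cast
    rw [← Finset.sum_congr rfl fun i (_ : i ∈ Finset.univ) => KD_margB d hd ψ i,
      ← Finset.sum_congr rfl fun j (_ : j ∈ Finset.univ) => KD_margA d ψ j]
    exact Finset.sum_comm
  exact_mod_cast h1

lemma abs_fourierVec (d : ℕ) (hd : d ≠ 0) (j i : Fin d) :
    Complex.abs (fourierVec d j i) = 1 / Real.sqrt d := by
  rw [fourierVec]
  rw [map_div₀, map_pow, omega_abs, one_pow]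
  rw [Complex.abs_ofReal, _root_.abs_of_nonneg (Real.sqrt_nonneg _)]

lemma abs_dftCoeff_le (d : ℕ) (hd : d ≠ 0) (ψ : Fin d → ℂ) (j : Fin d) :
    Complex.abs (dftCoeff d ψ j) ≤ (∑ i, Complex.abs (ψ i)) / Real.sqrt d := by
  rw [dftCoeff]
  refine le_trans (Complex.abs.sum_le _ _) ?_
  rw [Finset.sum_div]
  refine Finset.sum_le_sum fun i _ => ?_
  rw [map_mul, Complex.abs_conj, abs_fourierVec d hd j i, one_div, inv_mul_eq_div]

lemma re_eq_abs_imp (w : ℂ) (h : w.re = Complex.abs w) : w = ((Complex.abs w : ℝ) : ℂ) := by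
  have hsq : w.re ^ 2 + w.im ^ 2 = (Complex.abs w) ^ 2 := by
    rw [Complex.sq_abs, Complex.normSq_apply]; ring
  have him : w.im = 0 := by
    rw [h] at hsq
    have h2 : w.im ^ 2 = 0 := by linarith
    exact sq_eq_zero_iff.mp h2
  rw [← h]
  exact Complex.ext (by simp) (by simp [him])

lemma tri_eq {ι : Type*} (s : Finset ι) (z : ι → ℂ)
    (h : Complex.abs (∑ k ∈ s, z k) = ∑ k ∈ s, Complex.abs (z k)) {i : ι} (hi : i ∈ s) :
    z i * (starRingEnd ℂ) (∑ k ∈ s, z k)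
      = ((Complex.abs (z i) * Complex.abs (∑ k ∈ s, z k) : ℝ) : ℂ) := by
  set S := ∑ k ∈ s, z k with hS
  have hle : ∀ k, (z k * (starRingEnd ℂ) S).re ≤ Complex.abs (z k) * Complex.abs S := by
    intro k
    calc (z k * (starRingEnd ℂ) S).re ≤ Complex.abs (z k * (starRingEnd ℂ) S) := Complex.re_le_abs _
    _ = Complex.abs (z k) * Complex.abs S := by rw [map_mul, Complex.abs_conj]
  have hsum : ∑ k ∈ s, (z k * (starRingEnd ℂ) S).re = ∑ k ∈ s, Complex.abs (z k) * Complex.abs S := by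
    have h1 : ∑ k ∈ s, (z k * (starRingEnd ℂ) S).re = (S * (starRingEnd ℂ) S).re := by
      rw [← Complex.re_sum, ← Finset.sum_mul]
    rw [h1, Complex.mul_conj, ← Finset.sum_mul, ← h]
    simp [Complex.normSq_eq_abs, sq]
  have hall : ∀ k ∈ s, Complex.abs (z k) * Complex.abs S - (z k * (starRingEnd ℂ) S).re = 0 := by
    intro k hk
    have hz : ∑ k ∈ s, (Complex.abs (z k) * Complex.abs S - (z k * (starRingEnd ℂ) S).re) = 0 := by
      rw [Finset.sum_sub_distrib, hsum, sub_self]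
    exact (Finset.sum_eq_zero_iff_of_nonneg (fun k _ => by linarith [hle k])).mp hz k hk
  have hre : (z i * (starRingEnd ℂ) S).re = Complex.abs (z i * (starRingEnd ℂ) S) := by
    have := hall i hi
    rw [map_mul, Complex.abs_conj]
    linarith
  rw [re_eq_abs_imp _ hre, map_mul, Complex.abs_conj]


/-- A nonzero `ψ ∈ ℂ^d` is KD nonclassical with respect to the standard and
Fourier bases if and only if `n_A(ψ)·n_B(ψ) > d`. -/
theorem kd_nonclassical_iff (d : ℕ) (hd : 2 ≤ d) (ψ : Fin d → ℂ) (hψ : ψ ≠ 0) :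
    (¬ ∀ i j : Fin d, ∃ r : ℝ, 0 ≤ r ∧ KD d ψ i j = (r : ℂ)) ↔ d < nA d ψ * nB d ψ := by
  unfold nA nB
  have hd0 : d ≠ 0 := by omega
  have hdR : (0 : ℝ) < d := by exact_mod_cast Nat.pos_of_ne_zero hd0
  set b := dftCoeff d ψ with hb
  have hsd0 : 0 < Real.sqrt (d : ℝ) := Real.sqrt_pos.mpr hdR
  have hsd2 : Real.sqrt (d : ℝ) * Real.sqrt (d : ℝ) = (d : ℝ) := Real.mul_self_sqrt hdR.le
  set S := Finset.univ.filter (fun i => ψ i ≠ 0) with hSdef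
  set T := Finset.univ.filter (fun j => b j ≠ 0) with hTdef
  set A1 := ∑ i, Complex.abs (ψ i) with hA1
  set B1 := ∑ j, Complex.abs (b j) with hB1
  set A2 := ∑ i, Complex.normSq (ψ i) with hA2
  set B2 := ∑ j, Complex.normSq (b j) with hB2
  have hA1S : A1 = ∑ i ∈ S, Complex.abs (ψ i) := by
    rw [hA1]
    refine (Finset.sum_subset (Finset.subset_univ S) fun i _ hi => ?_).symm
    simp only [hSdef, Finset.mem_filter, Finset.mem_univ, true_and, not_not] at hi
    simp [hi]
  have hB1T : B1 = ∑ j ∈ T, Complex.abs (b j) := by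
    rw [hB1]
    refine (Finset.sum_subset (Finset.subset_univ T) fun j _ hj => ?_).symm
    simp only [hTdef, Finset.mem_filter, Finset.mem_univ, true_and, not_not] at hj
    simp [hj]
  have hB2T : B2 = ∑ j ∈ T, Complex.normSq (b j) := by
    rw [hB2]
    refine (Finset.sum_subset (Finset.subset_univ T) fun j _ hj => ?_).symm
    simp only [hTdef, Finset.mem_filter, Finset.mem_univ, true_and, not_not] at hj
    simp [hj]
  have hA1pos : 0 < A1 := by
    obtain ⟨i, hi⟩ := Function.ne_iff.mp hψ
    have hi' : ψ i ≠ 0 := by simpa using hi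
    have h1 : Complex.abs (ψ i) ≤ A1 := by
      rw [hA1]
      exact Finset.single_le_sum (f := fun k => Complex.abs (ψ k))
        (fun k _ => AbsoluteValue.nonneg _ _) (Finset.mem_univ i)
    have h2 : 0 < Complex.abs (ψ i) := (AbsoluteValue.pos_iff Complex.abs).mpr hi'
    linarith
  have hA2pos : 0 < A2 := by
    obtain ⟨i, hi⟩ := Function.ne_iff.mp hψ
    have hi' : ψ i ≠ 0 := by simpa using hi
    have h1 : Complex.normSq (ψ i) ≤ A2 := by
      rw [hA2]
      exact Finset.single_le_sum (f := fun k => Complex.normSq (ψ k))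
        (fun k _ => Complex.normSq_nonneg _) (Finset.mem_univ i)
    have h2 : 0 < Complex.normSq (ψ i) := Complex.normSq_pos.mpr hi'
    linarith
  constructor
  · -- nonclassical → d < s * t  (contrapositive: s*t ≤ d → classical)
    intro hnc
    by_contra hle
    push_neg at hle
    apply hnc
    have hleR : ((S.card : ℝ)) * (T.card : ℝ) ≤ (d : ℝ) := by exact_mod_cast hle
    have hparse : A2 = B2 := by rw [hA2, hB2]; exact parseval d hd0 ψ
    have hCS : A1 ^ 2 ≤ (S.card : ℝ) * A2 := by
      rw [hA1S]
      calc (∑ i ∈ S, Complex.abs (ψ i)) ^ 2 ≤ (S.card : ℝ) * ∑ i ∈ S, Complex.abs (ψ i) ^ 2 :=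
            sq_sum_le_card_mul_sum_sq
        _ ≤ (S.card : ℝ) * A2 := by
            refine mul_le_mul_of_nonneg_left ?_ (Nat.cast_nonneg _)
            rw [hA2]
            refine (Finset.sum_le_sum fun i (_ : i ∈ S) => le_of_eq (Complex.normSq_eq_abs _).symm).trans ?_
            exact Finset.sum_le_sum_of_subset_of_nonneg (Finset.subset_univ S)
              (fun i _ _ => Complex.normSq_nonneg _)
    have hbound : ∀ j, Complex.normSq (b j) ≤ A1 ^ 2 / d := by
      intro j
      have h1 : Complex.abs (b j) ≤ A1 / Real.sqrt (d : ℝ) := by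
        have := abs_dftCoeff_le d hd0 ψ j
        rw [← hb, ← hA1] at this
        exact this
      have h2 : Complex.normSq (b j) = Complex.abs (b j) ^ 2 := Complex.normSq_eq_abs _
      have h3 : Complex.abs (b j) ^ 2 ≤ (A1 / Real.sqrt (d : ℝ)) ^ 2 :=
        pow_le_pow_left₀ (AbsoluteValue.nonneg _ _) h1 2
      have h4 : (A1 / Real.sqrt (d : ℝ)) ^ 2 = A1 ^ 2 / d := by
        rw [div_pow, Real.sq_sqrt hdR.le]
      linarith
    have hchain : (T.card : ℝ) * (A1 ^ 2 / d) ≤ B2 := by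
      have h1 : (T.card : ℝ) * A1 ^ 2 ≤ (d : ℝ) * A2 := by
        nlinarith [mul_le_mul_of_nonneg_left hCS (Nat.cast_nonneg T.card : (0:ℝ) ≤ T.card),
          mul_le_mul_of_nonneg_right hleR hA2pos.le]
      rw [mul_div_assoc'] at *
      rw [div_le_iff₀ hdR]
      calc (T.card : ℝ) * A1 ^ 2 ≤ (d : ℝ) * A2 := h1
        _ = B2 * d := by rw [hparse]; ring
    have heq : ∀ j ∈ T, Complex.normSq (b j) = A1 ^ 2 / d := by
      have hnn : ∀ j ∈ T, 0 ≤ A1 ^ 2 / d - Complex.normSq (b j) :=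
        fun j _ => by linarith [hbound j]
      have hsum0 : ∑ j ∈ T, (A1 ^ 2 / d - Complex.normSq (b j)) ≤ 0 := by
        rw [Finset.sum_sub_distrib, Finset.sum_const, ← hB2T, nsmul_eq_mul]
        linarith
      intro j hj
      have := (Finset.sum_eq_zero_iff_of_nonneg hnn).mp
        (le_antisymm hsum0 (Finset.sum_nonneg hnn)) j hj
      linarith
    intro i j
    by_cases hjT : j ∈ T
    · have habsj : Complex.abs (b j) = A1 / Real.sqrt (d : ℝ) := by
        have h2 : Complex.abs (b j) ^ 2 = A1 ^ 2 / (Real.sqrt (d : ℝ) * Real.sqrt (d : ℝ)) := by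
          rw [← Complex.normSq_eq_abs, heq j hjT, hsd2]
        have h4 : (Complex.abs (b j) - A1 / Real.sqrt (d : ℝ)) *
            (Complex.abs (b j) + A1 / Real.sqrt (d : ℝ)) = 0 := by
          linear_combination h2
        rcases mul_eq_zero.mp h4 with h5 | h5
        · linarith
        · have := AbsoluteValue.nonneg Complex.abs (b j)
          have : 0 < A1 / Real.sqrt (d : ℝ) := div_pos hA1pos hsd0
          linarith
      set z : Fin d → ℂ := fun k => (starRingEnd ℂ) (fourierVec d j k) * ψ k with hz
      have hzb : ∑ k, z k = b j := rfl
      have habstri : Complex.abs (∑ k, z k) = ∑ k, Complex.abs (z k) := by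
        rw [hzb, habsj]
        have hzk : ∀ k, Complex.abs (z k) = Complex.abs (ψ k) * (1 / Real.sqrt (d : ℝ)) := by
          intro k
          rw [hz]
          simp only [map_mul, Complex.abs_conj]
          rw [abs_fourierVec d hd0 j k]
          ring
        rw [Finset.sum_congr rfl fun k _ => hzk k, ← Finset.sum_mul, ← hA1]
        ring
      have hKDz : KD d ψ i j = z i * (starRingEnd ℂ) (∑ k, z k) := by
        rw [KD_eq, hzb, ← hb, hz]
        ring
      refine ⟨Complex.abs (z i) * Complex.abs (∑ k, z k), ?_, ?_⟩
      · positivity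
      · rw [hKDz, tri_eq Finset.univ z habstri (Finset.mem_univ i)]
    · have hbj : b j = 0 := by
        by_contra hne
        exact hjT (Finset.mem_filter.mpr ⟨Finset.mem_univ j, hne⟩)
      refine ⟨0, le_refl 0, ?_⟩
      rw [KD_eq, ← hb, hbj]
      simp
  · -- d < s*t → nonclassical (contrapositive: classical → s*t = d)
    intro hlt hcl
    have habs : ∀ i j, KD d ψ i j =
        ((Complex.abs (ψ i) * Complex.abs (b j) / Real.sqrt (d : ℝ) : ℝ) : ℂ) := by
      intro i j
      obtain ⟨r, hr0, hKD⟩ := hcl i j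
      have h1 : Complex.abs (KD d ψ i j) = r := by
        rw [hKD, Complex.abs_ofReal, abs_of_nonneg hr0]
      have h2 : Complex.abs (KD d ψ i j) =
          Complex.abs (ψ i) * Complex.abs (b j) / Real.sqrt (d : ℝ) := by
        rw [KD_eq]
        simp only [map_mul, Complex.abs_conj]
        rw [abs_fourierVec d hd0 j i, ← hb]
        ring
      rw [hKD, ← h1, h2]
    have hrow : ∀ j, Complex.normSq (b j) = A1 * Complex.abs (b j) / Real.sqrt (d : ℝ) := by
      intro j
      have h1 : ((Complex.normSq (b j) : ℝ) : ℂ) =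
          ((A1 * Complex.abs (b j) / Real.sqrt (d : ℝ) : ℝ) : ℂ) := by
        have hm : ∑ i, KD d ψ i j = ((Complex.normSq (b j) : ℝ) : ℂ) := by
          rw [hb]; exact KD_margA d ψ j
        rw [← hm, Finset.sum_congr rfl fun i _ => habs i j, ← Complex.ofReal_sum]
        congr 1
        rw [← Finset.sum_div, ← Finset.sum_mul, ← hA1]
      exact_mod_cast h1
    have hcol : ∀ i, Complex.normSq (ψ i) = Complex.abs (ψ i) * B1 / Real.sqrt (d : ℝ) := by
      intro i
      have h1 : ((Complex.normSq (ψ i) : ℝ) : ℂ) =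
          ((Complex.abs (ψ i) * B1 / Real.sqrt (d : ℝ) : ℝ) : ℂ) := by
        rw [← KD_margB d hd0 ψ i, Finset.sum_congr rfl fun j _ => habs i j,
          ← Complex.ofReal_sum]
        congr 1
        rw [← Finset.sum_div, ← Finset.mul_sum, ← hB1]
      exact_mod_cast h1
    have hbT : ∀ j ∈ T, Complex.abs (b j) = A1 / Real.sqrt (d : ℝ) := by
      intro j hj
      have hne : b j ≠ 0 := (Finset.mem_filter.mp hj).2
      have hpos : 0 < Complex.abs (b j) := (AbsoluteValue.pos_iff Complex.abs).mpr hne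
      have h1 := hrow j
      rw [Complex.normSq_eq_abs, eq_div_iff hsd0.ne'] at h1
      have h3 : Complex.abs (b j) * (Complex.abs (b j) * Real.sqrt (d : ℝ)) =
          Complex.abs (b j) * A1 := by linear_combination h1
      have h4 := mul_left_cancel₀ hpos.ne' h3
      rw [eq_div_iff hsd0.ne']
      linarith
    have haS : ∀ i ∈ S, Complex.abs (ψ i) = B1 / Real.sqrt (d : ℝ) := by
      intro i hi
      have hne : ψ i ≠ 0 := (Finset.mem_filter.mp hi).2
      have hpos : 0 < Complex.abs (ψ i) := (AbsoluteValue.pos_iff Complex.abs).mpr hne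
      have h1 := hcol i
      rw [Complex.normSq_eq_abs, eq_div_iff hsd0.ne'] at h1
      have h3 : Complex.abs (ψ i) * (Complex.abs (ψ i) * Real.sqrt (d : ℝ)) =
          Complex.abs (ψ i) * B1 := by linear_combination h1
      have h4 := mul_left_cancel₀ hpos.ne' h3
      rw [eq_div_iff hsd0.ne']
      linarith
    have hA1eq : A1 = (S.card : ℝ) * (B1 / Real.sqrt (d : ℝ)) := by
      rw [hA1S, Finset.sum_congr rfl haS, Finset.sum_const, nsmul_eq_mul]
    have hB1eq : B1 = (T.card : ℝ) * (A1 / Real.sqrt (d : ℝ)) := by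
      rw [hB1T, Finset.sum_congr rfl hbT, Finset.sum_const, nsmul_eq_mul]
    have e1 : A1 * Real.sqrt (d : ℝ) = (S.card : ℝ) * B1 := by
      rw [hA1eq, mul_assoc, div_mul_cancel₀ _ hsd0.ne']
    have e2 : B1 * Real.sqrt (d : ℝ) = (T.card : ℝ) * A1 := by
      rw [hB1eq, mul_assoc, div_mul_cancel₀ _ hsd0.ne']
    have hfin : A1 * (d : ℝ) = ((S.card : ℝ) * (T.card : ℝ)) * A1 := by
      calc A1 * (d : ℝ) = A1 * (Real.sqrt (d:ℝ) * Real.sqrt (d:ℝ)) := by rw [hsd2]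
        _ = (A1 * Real.sqrt (d:ℝ)) * Real.sqrt (d:ℝ) := by ring
        _ = ((S.card : ℝ) * B1) * Real.sqrt (d:ℝ) := by rw [e1]
        _ = (S.card : ℝ) * (B1 * Real.sqrt (d:ℝ)) := by ring
        _ = (S.card : ℝ) * ((T.card : ℝ) * A1) := by rw [e2]
        _ = ((S.card : ℝ) * (T.card : ℝ)) * A1 := by ring
    have hst : (S.card : ℝ) * (T.card : ℝ) = (d : ℝ) := by
      have h2 : A1 * (d : ℝ) = A1 * ((S.card : ℝ) * (T.card : ℝ)) := by linarith [hfin]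
      have := mul_left_cancel₀ hA1pos.ne' h2
      linarith
    have : S.card * T.card = d := by exact_mod_cast hst
    omega
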